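/- Let ℓ ≥ 1, k ≥ 2, and n ≥ 1. Then the maximal Hamming distance over all k-tuples of length-n level-ℓ sequence patterns equals n − ⌈n / ℓ^{k−1}⌉; that is, every k-tuple (t_1,…,t_k) of length-n level-ℓ sequence patterns satisfies d(t_1,…,t_k) ≤ n − ⌈n / ℓ^{k−1}⌉, and there exists a k-tuple of length-n level-ℓ sequence patterns attaining this value. -/

import Mathlib

/-- Two sequences are equivalent if one is obtained from the other by relabeling symbols. -/
def seqSetoid (n ℓ : ℕ) : Setoid (Fin n → Fin ℓ) where
  r q p := ∃ φ : Equiv.Perm (Fin ℓ), ⇑φ ∘ q = p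
  iseqv := by
    constructor
    · intro q; exact ⟨Equiv.refl _, rfl⟩
    · rintro q p ⟨φ, rfl⟩
      exact ⟨φ.symm, by funext i; simp⟩
    · rintro q p r ⟨φ₁, rfl⟩ ⟨φ₂, rfl⟩
      exact ⟨φ₁.trans φ₂, by funext i; simp⟩

/-- The type of length-`n` level-`ℓ` sequence patterns. -/
def SeqPattern (n ℓ : ℕ) : Type := Quotient (seqSetoid n ℓ)

/-- The Hamming distance of a \`k\`-tuple of sequences: the number of indices at which
the values of the sequences are not all equal. -/
noncomputable def tupleDist {n ℓ k : ℕ} (Q : Fin k → Fin n → Fin ℓ) : ℕ :=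
  Nat.card {i : Fin n // ¬ ∀ j j' : Fin k, Q j i = Q j' i}

/-- The Hamming distance of a \`k\`-tuple of sequence patterns: the minimum of the tuple
Hamming distance over all tuples of representatives. -/
noncomputable def patternTupleDist {n ℓ k : ℕ} (T : Fin k → SeqPattern n ℓ) : ℕ :=
  sInf {d | ∃ Q : Fin k → Fin n → Fin ℓ,
    (∀ j, Quotient.mk (seqSetoid n ℓ) (Q j) = T j) ∧ tupleDist Q = d}

open Finset in
private lemma tupleDist_eq_sub {n ℓ k : ℕ} (Q : Fin k → Fin n → Fin ℓ) :
    tupleDist Q = n - (univ.filter fun i : Fin n => ∀ j j' : Fin k, Q j i = Q j' i).card := by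
  classical
  unfold tupleDist
  rw [Nat.card_eq_fintype_card, Fintype.card_subtype_compl, Fintype.card_fin,
    Fintype.card_subtype]

open Finset in
private lemma fiber_mod_card_le (n m : ℕ) (hm : 0 < m) (hn : 1 ≤ n) (r : ℕ) :
    (univ.filter fun i : Fin n => i.val % m = r).card ≤ (n + m - 1) / m := by
  set c := (n + m - 1) / m with hc
  have hcalc : c = (n - 1) / m + 1 := by
    have h1 : n + m - 1 = (n - 1) + m := by omega
    rw [hc, h1, Nat.add_div_right _ hm]
  calc (univ.filter fun i : Fin n => i.val % m = r).card
      ≤ (Finset.range c).card := by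
        apply Finset.card_le_card_of_injOn (fun i => i.val / m)
        · intro i _
          simp only [Finset.mem_range]
          have hi' : i.val ≤ n - 1 := by have := i.isLt; omega
          have := Nat.div_le_div_right (c := m) hi'
          rw [Finset.mem_coe, Finset.mem_range]
          omega
        · intro i hi i' hi' h
          simp only [coe_filter, Set.mem_setOf_eq, mem_univ, true_and] at hi hi'
          have h' : i.val / m = i'.val / m := h
          have h1 := Nat.div_add_mod i.val m
          have h2 := Nat.div_add_mod i'.val m
          have h3 : m * (i.val / m) = m * (i'.val / m) := by rw [h']
          apply Fin.ext
          omega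
    _ = c := Finset.card_range c

open Finset in
private lemma upper_bound {n ℓ k : ℕ} (hℓ : 1 ≤ ℓ) (hk : 2 ≤ k) (hn : 1 ≤ n)
    (T : Fin k → SeqPattern n ℓ) :
    patternTupleDist T ≤ n - (n + ℓ ^ (k - 1) - 1) / ℓ ^ (k - 1) := by
  classical
  haveI : NeZero ℓ := ⟨by omega⟩
  haveI : NeZero k := ⟨by omega⟩
  set m := ℓ ^ (k - 1) with hm
  have hmpos : 0 < m := Nat.pow_pos (by omega)
  set c := (n + m - 1) / m with hc
  set emb : Fin (k - 1) → Fin k := fun j => ⟨j.val + 1, by have := j.isLt; omega⟩ with hemb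
  set Q : Fin k → Fin n → Fin ℓ := fun j => Quotient.out (T j) with hQ
  set F : Fin n → (Fin (k - 1) → Fin ℓ) := fun i j => Q (emb j) i - Q 0 i with hF
  -- pigeonhole
  have hcardlt : Fintype.card (Fin (k - 1) → Fin ℓ) * (c - 1) < Fintype.card (Fin n) := by
    have h1 : Fintype.card (Fin (k - 1) → Fin ℓ) = m := by simp [hm]
    rw [h1, Fintype.card_fin]
    have h2 : c * m ≤ n + m - 1 := Nat.div_mul_le_self _ _
    have h3 : 1 ≤ c := by
      rw [hc, Nat.le_div_iff_mul_le hmpos]; omega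
    obtain ⟨c', hc'⟩ : ∃ c', c = c' + 1 := ⟨c - 1, by omega⟩
    have h4 : (c' + 1) * m = c' * m + m := by ring
    have h5 : m * (c - 1) = c' * m := by rw [hc']; simp [Nat.mul_comm]
    rw [h5]; rw [hc'] at h2; omega
  obtain ⟨a, ha⟩ := Fintype.exists_lt_card_fiber_of_mul_lt_card F hcardlt
  -- the permutations
  set φ : Fin k → Equiv.Perm (Fin ℓ) := fun j =>
    if h : j = 0 then Equiv.refl _
    else Equiv.subRight (a ⟨j.val - 1, by
      have h1 : j.val ≠ 0 := by exact fun h0 => h (Fin.ext (by rw [h0]; rfl))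
      have := j.isLt; omega⟩) with hφ
  set P : Fin k → Fin n → Fin ℓ := fun j => ⇑(φ j) ∘ Q j with hP
  have hrep : ∀ j, Quotient.mk (seqSetoid n ℓ) (P j) = T j := by
    intro j
    have h1 : Quotient.mk (seqSetoid n ℓ) (Q j) = Quotient.mk (seqSetoid n ℓ) (P j) :=
      Quotient.sound ⟨φ j, rfl⟩
    exact h1.symm.trans (Quotient.out_eq (T j))
  have hagree : ∀ i, F i = a → ∀ j, P j i = Q 0 i := by
    intro i hFi j
    by_cases hj : j = 0
    · subst hj; simp [hP, hφ]
    · have h1 : j.val ≠ 0 := by exact fun h0 => hj (Fin.ext (by rw [h0]; rfl))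
      have h2 : j.val - 1 < k - 1 := by have := j.isLt; omega
      have hjj : emb ⟨j.val - 1, h2⟩ = j := by
        apply Fin.ext
        show j.val - 1 + 1 = j.val
        omega
      have ha' : a ⟨j.val - 1, h2⟩ = Q j i - Q 0 i := by
        rw [← hFi]
        show Q (emb ⟨j.val - 1, h2⟩) i - Q 0 i = _
        rw [hjj]
      simp only [hP, Function.comp_apply, hφ, dif_neg hj, Equiv.subRight_apply]
      rw [ha', sub_sub_cancel]
  have hsub : (univ.filter fun i : Fin n => F i = a) ⊆
      (univ.filter fun i : Fin n => ∀ j j' : Fin k, P j i = P j' i) := by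
    intro i hi
    simp only [mem_filter, mem_univ, true_and] at hi ⊢
    intro j j'
    rw [hagree i hi j, hagree i hi j']
  have hcge : c ≤ (univ.filter fun i : Fin n => ∀ j j' : Fin k, P j i = P j' i).card := by
    have := Finset.card_le_card hsub
    have h3 : 1 ≤ c := by rw [hc, Nat.le_div_iff_mul_le hmpos]; omega
    omega
  have hd : tupleDist P ≤ n - c := by
    rw [tupleDist_eq_sub]
    omega
  have hmem : tupleDist P ∈ {d | ∃ Q : Fin k → Fin n → Fin ℓ,
      (∀ j, Quotient.mk (seqSetoid n ℓ) (Q j) = T j) ∧ tupleDist Q = d} :=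
    ⟨P, hrep, rfl⟩
  exact le_trans (Nat.sInf_le hmem) hd

open Finset

/-- The maximal Hamming distance over all `k`-tuples of length-`n` level-`ℓ` sequence
patterns equals `n - ⌈n / ℓ^(k-1)⌉`: this value bounds the distance of every tuple of
patterns, and it is attained. -/
theorem max_patternTupleDist (n ℓ k : ℕ) (hℓ : 1 ≤ ℓ) (hk : 2 ≤ k) (hn : 1 ≤ n) :
    (∀ T : Fin k → SeqPattern n ℓ,
        patternTupleDist T ≤ n - (n + ℓ ^ (k - 1) - 1) / ℓ ^ (k - 1)) ∧
      ∃ T : Fin k → SeqPattern n ℓ,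
        patternTupleDist T = n - (n + ℓ ^ (k - 1) - 1) / ℓ ^ (k - 1) := by
  classical
  haveI : NeZero ℓ := ⟨by omega⟩
  haveI : NeZero k := ⟨by omega⟩
  refine ⟨fun T => upper_bound hℓ hk hn T, ?_⟩
  set m := ℓ ^ (k - 1) with hm
  have hmpos : 0 < m := Nat.pow_pos (by omega)
  set c := (n + m - 1) / m with hc
  -- the construction
  set emb : Fin (k - 1) → Fin k := fun j => ⟨j.val + 1, by have := j.isLt; omega⟩ with hemb
  set E : Fin m ≃ (Fin (k - 1) → Fin ℓ) := finFunctionFinEquiv.symm with hE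
  set g : Fin n → Fin m := fun i => ⟨i.val % m, Nat.mod_lt _ hmpos⟩ with hg
  set q : Fin k → Fin n → Fin ℓ := fun j i =>
    if h : j = 0 then 0
    else E (g i) ⟨j.val - 1, by
      have h1 : j.val ≠ 0 := by exact fun h0 => h (Fin.ext (by rw [h0]; rfl))
      have := j.isLt; omega⟩ with hq
  set T : Fin k → SeqPattern n ℓ := fun j => Quotient.mk (seqSetoid n ℓ) (q j) with hT
  refine ⟨T, ?_⟩
  have hq' : ∀ (j' : Fin (k - 1)) (i : Fin n), q (emb j') i = E (g i) j' := by
    intro j' i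
    have h0 : emb j' ≠ 0 := by
      simp only [hemb, Ne, Fin.ext_iff, Fin.val_zero]
      omega
    rw [hq]
    simp only
    rw [dif_neg h0]
    congr 1
  -- lower bound: every representative tuple has distance ≥ n - c
  have hlow : ∀ d ∈ {d | ∃ Q : Fin k → Fin n → Fin ℓ,
      (∀ j, Quotient.mk (seqSetoid n ℓ) (Q j) = T j) ∧ tupleDist Q = d}, n - c ≤ d := by
    rintro d ⟨P, hPrep, rfl⟩
    have hex : ∀ j, ∃ φ : Equiv.Perm (Fin ℓ), ⇑φ ∘ q j = P j := by
      intro j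
      exact Quotient.exact (show Quotient.mk (seqSetoid n ℓ) (q j)
        = Quotient.mk (seqSetoid n ℓ) (P j) by rw [hPrep j, hT])
    choose φ hφ using hex
    set b : Fin ℓ := φ 0 0 with hb
    set aa : Fin (k - 1) → Fin ℓ := fun j' => (φ (emb j')).symm b with haa
    have hsub : (univ.filter fun i : Fin n => ∀ j j' : Fin k, P j i = P j' i) ⊆
        (univ.filter fun i : Fin n => i.val % m = (E.symm aa).val) := by
      intro i hi
      simp only [mem_filter, mem_univ, true_and] at hi ⊢
      have hgi : E (g i) = aa := by
        funext j'
        have h1 : P (emb j') i = P 0 i := hi _ _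
        rw [← hφ (emb j'), ← hφ 0] at h1
        simp only [Function.comp_apply] at h1
        rw [hq' j' i] at h1
        have hq0 : q 0 i = 0 := by rw [hq]; simp
        rw [hq0] at h1
        rw [haa]
        simp only
        rw [Equiv.eq_symm_apply]
        exact h1
      have hgE : g i = E.symm aa := by rw [← hgi]; simp
      have := congrArg Fin.val hgE
      simpa [hg] using this
    have hcard : (univ.filter fun i : Fin n => ∀ j j' : Fin k, P j i = P j' i).card ≤ c := by
      refine le_trans (Finset.card_le_card hsub) ?_
      exact fiber_mod_card_le n m hmpos hn _
    rw [tupleDist_eq_sub]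
    omega
  have hne : ({d | ∃ Q : Fin k → Fin n → Fin ℓ,
      (∀ j, Quotient.mk (seqSetoid n ℓ) (Q j) = T j) ∧ tupleDist Q = d}).Nonempty :=
    ⟨tupleDist q, q, fun j => rfl, rfl⟩
  have h1 : n - c ≤ patternTupleDist T := hlow _ (Nat.sInf_mem hne)
  have h2 : patternTupleDist T ≤ n - c := upper_bound hℓ hk hn T
  omega
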